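/- Let G be a nonnegative, integrable, (h,m)-convex function on an interval J containing [ν, μ] and the points ν/m, μ/m, μ/m², with ν < μ, m ∈ (0,1], and h nonnegative and integrable on [0,1]. Then h(1/2) · (1/(μ-ν)) ∫_ν^μ [G(x) + m·G(x/m)] dx ≤ h(1/2) · [G(ν) + m²·G(μ/m²) + m·(G(μ/m) + G(ν/m))] · ∫_0^1 h(γ) dγ. -/

import Mathlib

theorem hm_convex_HH_right
    (ν μ m : ℝ) (hνμ : ν < μ) (hm : m ∈ Set.Ioc (0:ℝ) 1)
    (J : Set ℝ) (hJint : Set.OrdConnected J)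
    (hJ : Set.Icc ν μ ⊆ J) (hνm : ν / m ∈ J) (hμm : μ / m ∈ J) (hμm2 : μ / m ^ 2 ∈ J)
    (h : ℝ → ℝ) (hh : ∀ γ ∈ Set.Icc (0:ℝ) 1, 0 ≤ h γ)
    (hhint : IntervalIntegrable h MeasureTheory.volume 0 1)
    (G : ℝ → ℝ)
    (hGnonneg : ∀ x ∈ J, 0 ≤ G x)
    (hGint : IntervalIntegrable G MeasureTheory.volume ν μ)
    (hGmint : IntervalIntegrable (fun x => G (x / m)) MeasureTheory.volume ν μ)
    (hG : ∀ x ∈ J, ∀ y ∈ J, ∀ γ ∈ Set.Icc (0:ℝ) 1,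
      G (γ * x + m * (1 - γ) * y) ≤ h γ * G x + m * h (1 - γ) * G y) :
    h (1/2) * ((1 / (μ - ν)) * ∫ x in ν..μ, (G x + m * G (x / m)))
      ≤ h (1/2) * (G ν + m ^ 2 * G (μ / m ^ 2) + m * (G (μ / m) + G (ν / m)))
          * ∫ γ in (0:ℝ)..1, h γ := by
  obtain ⟨hm0, hm1⟩ := hm
  have hmne : m ≠ 0 := ne_of_gt hm0
  have hc : (0:ℝ) < μ - ν := sub_pos.mpr hνμ
  have hcne : μ - ν ≠ 0 := ne_of_gt hc
  set A1 : ℝ := G ν + m * G (ν / m) with hA1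
  set A2 : ℝ := m * G (μ / m) + m ^ 2 * G (μ / m ^ 2) with hA2
  set F : ℝ → ℝ := fun x => G x + m * G (x / m) with hF
  -- pointwise bound
  have key : ∀ t ∈ Set.Icc (0:ℝ) 1,
      F ((μ - ν) * t + ν) ≤ h (1 - t) * A1 + h t * A2 := by
    intro t ht
    obtain ⟨ht0, ht1⟩ := ht
    have h1t : (1 - t) ∈ Set.Icc (0:ℝ) 1 := ⟨by linarith, by linarith⟩
    set x : ℝ := (μ - ν) * t + ν with hx
    have hxmem : x ∈ Set.Icc ν μ := ⟨by nlinarith, by nlinarith⟩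
    have hxJ : x ∈ J := hJ hxmem
    have hνJ : ν ∈ J := hJ ⟨le_refl _, le_of_lt hνμ⟩
    have h1 := hG ν hνJ (μ / m) hμm (1 - t) h1t
    have h2 := hG (ν / m) hνm (μ / m ^ 2) hμm2 (1 - t) h1t
    have e1 : (1 - t) * ν + m * (1 - (1 - t)) * (μ / m) = x := by
      field_simp; ring
    have e2 : (1 - t) * (ν / m) + m * (1 - (1 - t)) * (μ / m ^ 2) = x / m := by
      field_simp; ring
    rw [e1, sub_sub_cancel] at h1
    rw [e2, sub_sub_cancel] at h2
    simp only [hF, hA1, hA2]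
    nlinarith [hm0, h1, h2]
  -- integrability of F ∘ affine
  have hFint : IntervalIntegrable F MeasureTheory.volume ν μ :=
    hGint.add (hGmint.const_mul m)
  have hFcomp : IntervalIntegrable (fun t => F ((μ - ν) * t + ν))
      MeasureTheory.volume 0 1 := by
    have h1 : IntervalIntegrable (fun x => F (x + ν)) MeasureTheory.volume (ν - ν) (μ - ν) :=
      hFint.comp_add_right ν
    have h2 := h1.comp_mul_left (c := μ - ν)
    rw [sub_self] at h2
    simpa [hcne] using h2
  -- integrability of rhs
  have hhcomp : IntervalIntegrable (fun t => h (1 - t)) MeasureTheory.volume 0 1 := by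
    have := hhint.comp_sub_left 1
    simpa using this.symm
  have hrint : IntervalIntegrable (fun t => h (1 - t) * A1 + h t * A2)
      MeasureTheory.volume 0 1 := (hhcomp.mul_const A1).add (hhint.mul_const A2)
  -- integral comparison on [0,1]
  have hmono : (∫ t in (0:ℝ)..1, F ((μ - ν) * t + ν))
      ≤ ∫ t in (0:ℝ)..1, (h (1 - t) * A1 + h t * A2) := by
    apply intervalIntegral.integral_mono_on (by norm_num) hFcomp hrint
    exact key
  -- change of variables
  have hcov : (∫ t in (0:ℝ)..1, F ((μ - ν) * t + ν))
      = (μ - ν)⁻¹ * ∫ x in ν..μ, F x := by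
    rw [intervalIntegral.integral_comp_mul_add F hcne ν]
    simp [smul_eq_mul]
  -- compute rhs integral
  have hrhs : (∫ t in (0:ℝ)..1, (h (1 - t) * A1 + h t * A2))
      = (A1 + A2) * ∫ γ in (0:ℝ)..1, h γ := by
    rw [intervalIntegral.integral_add (hhcomp.mul_const A1) (hhint.mul_const A2),
      intervalIntegral.integral_mul_const, intervalIntegral.integral_mul_const]
    have : (∫ t in (0:ℝ)..1, h (1 - t)) = ∫ γ in (0:ℝ)..1, h γ := by
      rw [intervalIntegral.integral_comp_sub_left h 1]
      norm_num
    rw [this]; ring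
  have hmain : (1 / (μ - ν)) * (∫ x in ν..μ, F x)
      ≤ (G ν + m ^ 2 * G (μ / m ^ 2) + m * (G (μ / m) + G (ν / m)))
        * ∫ γ in (0:ℝ)..1, h γ := by
    have := hmono
    rw [hcov, hrhs] at this
    have heq : A1 + A2 = G ν + m ^ 2 * G (μ / m ^ 2) + m * (G (μ / m) + G (ν / m)) := by
      simp only [hA1, hA2]; ring
    rw [one_div]
    calc (μ - ν)⁻¹ * ∫ x in ν..μ, F x ≤ (A1 + A2) * ∫ γ in (0:ℝ)..1, h γ := this
      _ = _ := by rw [heq]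
  have hh2 : 0 ≤ h (1/2) := hh (1/2) (by norm_num)
  calc h (1/2) * ((1 / (μ - ν)) * ∫ x in ν..μ, (G x + m * G (x / m)))
      ≤ h (1/2) * ((G ν + m ^ 2 * G (μ / m ^ 2) + m * (G (μ / m) + G (ν / m)))
          * ∫ γ in (0:ℝ)..1, h γ) := by
        exact mul_le_mul_of_nonneg_left hmain hh2
    _ = _ := by ring
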